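/- arXiv:2101.11566 — 2 statements merged into one kernel-verified Lean document; each statement's English description precedes it below -/
import Mathlib

section
/- Let Σ̄, Σ_O, Q be symmetric positive definite matrices and H a matrix of appropriate dimensions. Define Σ = (HᵀQ⁻¹H + Σ_O⁻¹ + Σ̄⁻¹)⁻¹ and K = ΣHᵀQ⁻¹. Then K = Σ̄(Σ̄+Σ_O)⁻¹Σ_O Hᵀ (H Σ̄(Σ̄+Σ_O)⁻¹Σ_O Hᵀ + Q)⁻¹, i.e., the Kalman gain admits a form not depending on Σ. -/
open Matrix

/-- The Kalman gain `K = ΣHᵀQ⁻¹`, with `Σ = (HᵀQ⁻¹H + Σ_O⁻¹ + Σ̄⁻¹)⁻¹`, admits a form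
not depending on `Σ`: `K = Σ̄(Σ̄+Σ_O)⁻¹Σ_O Hᵀ (H Σ̄(Σ̄+Σ_O)⁻¹Σ_O Hᵀ + Q)⁻¹`. -/
theorem kalman_gain_form {n m : ℕ}
    (Sb SO : Matrix (Fin n) (Fin n) ℝ) (Q : Matrix (Fin m) (Fin m) ℝ)
    (H : Matrix (Fin m) (Fin n) ℝ)
    (hSb : Sb.PosDef) (hSO : SO.PosDef) (hQ : Q.PosDef)
    :
    ∀ (Sig : Matrix (Fin n) (Fin n) ℝ) (Kg : Matrix (Fin n) (Fin m) ℝ),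
      Sig = (Hᵀ * Q⁻¹ * H + SO⁻¹ + Sb⁻¹)⁻¹ →
      Kg = Sig * Hᵀ * Q⁻¹ →
      Kg = Sb * (Sb + SO)⁻¹ * SO * Hᵀ * (H * (Sb * (Sb + SO)⁻¹ * SO) * Hᵀ + Q)⁻¹ := by
  intro Sig Kg hSig hKg
  set P : Matrix (Fin n) (Fin n) ℝ := Sb * (Sb + SO)⁻¹ * SO with hPdef
  have hSbdet := Matrix.isUnit_iff_isUnit_det _ |>.mp hSb.isUnit
  have hSOdet := Matrix.isUnit_iff_isUnit_det _ |>.mp hSO.isUnit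
  have hQdet := Matrix.isUnit_iff_isUnit_det _ |>.mp hQ.isUnit
  -- P = (SO⁻¹ + Sb⁻¹)⁻¹
  have hfactor : SO⁻¹ + Sb⁻¹ = SO⁻¹ * (Sb + SO) * Sb⁻¹ := by
    rw [Matrix.mul_add, Matrix.add_mul, Matrix.mul_assoc SO⁻¹ Sb Sb⁻¹,
      Matrix.mul_nonsing_inv _ hSbdet, Matrix.nonsing_inv_mul _ hSOdet,
      Matrix.mul_one, Matrix.one_mul, add_comm]
  have hPeq : P = (SO⁻¹ + Sb⁻¹)⁻¹ := by
    rw [hfactor, Matrix.mul_inv_rev, Matrix.mul_inv_rev,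
      Matrix.nonsing_inv_nonsing_inv _ hSbdet, Matrix.nonsing_inv_nonsing_inv _ hSOdet,
      hPdef, Matrix.mul_assoc]
  have hPBinv : (SO⁻¹ + Sb⁻¹).PosDef := hSO.inv.add hSb.inv
  have hP : P.PosDef := hPeq ▸ hPBinv.inv
  have hPdet := Matrix.isUnit_iff_isUnit_det _ |>.mp hP.isUnit
  have hPinv : P⁻¹ = SO⁻¹ + Sb⁻¹ := by
    rw [hPeq, Matrix.nonsing_inv_nonsing_inv _
      (Matrix.isUnit_iff_isUnit_det _ |>.mp hPBinv.isUnit)]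
  -- S := H P Hᵀ + Q is PD
  have hHPHt : (H * P * Hᵀ).PosSemidef := by
    have := hP.posSemidef.mul_mul_conjTranspose_same H
    simpa using this
  have hS : (H * P * Hᵀ + Q).PosDef := Matrix.PosDef.posSemidef_add hHPHt hQ
  have hSdet := Matrix.isUnit_iff_isUnit_det _ |>.mp hS.isUnit
  -- M := HᵀQ⁻¹H + SO⁻¹ + Sb⁻¹ is PD
  have hHQH : (Hᵀ * Q⁻¹ * H).PosSemidef := by
    have := hQ.inv.posSemidef.conjTranspose_mul_mul_same H
    simpa using this
  have hM : (Hᵀ * Q⁻¹ * H + SO⁻¹ + Sb⁻¹).PosDef := by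
    rw [add_assoc]
    exact Matrix.PosDef.posSemidef_add hHQH (hSO.inv.add hSb.inv)
  have hMdet := Matrix.isUnit_iff_isUnit_det _ |>.mp hM.isUnit
  -- key identity
  have key : (Hᵀ * Q⁻¹ * H + SO⁻¹ + Sb⁻¹) * (P * Hᵀ * (H * P * Hᵀ + Q)⁻¹) = Hᵀ * Q⁻¹ := by
    have h1 : (Hᵀ * Q⁻¹ * H + SO⁻¹ + Sb⁻¹) * P = Hᵀ * Q⁻¹ * H * P + 1 := by
      rw [add_assoc, Matrix.add_mul, ← hPinv, Matrix.nonsing_inv_mul _ hPdet]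
    have h2 : Hᵀ * Q⁻¹ * H * P * Hᵀ + Hᵀ = Hᵀ * Q⁻¹ * (H * P * Hᵀ + Q) := by
      rw [Matrix.mul_add]
      congr 1
      · simp [Matrix.mul_assoc]
      · rw [Matrix.mul_assoc, Matrix.nonsing_inv_mul _ hQdet, Matrix.mul_one]
    calc (Hᵀ * Q⁻¹ * H + SO⁻¹ + Sb⁻¹) * (P * Hᵀ * (H * P * Hᵀ + Q)⁻¹)
        = ((Hᵀ * Q⁻¹ * H + SO⁻¹ + Sb⁻¹) * P) * Hᵀ * (H * P * Hᵀ + Q)⁻¹ := by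
          simp only [Matrix.mul_assoc]
      _ = (Hᵀ * Q⁻¹ * H * P * Hᵀ + Hᵀ) * (H * P * Hᵀ + Q)⁻¹ := by
          rw [h1, Matrix.add_mul, Matrix.one_mul]
      _ = Hᵀ * Q⁻¹ * ((H * P * Hᵀ + Q) * (H * P * Hᵀ + Q)⁻¹) := by
          rw [h2, Matrix.mul_assoc]
      _ = Hᵀ * Q⁻¹ := by
          rw [Matrix.mul_nonsing_inv _ hSdet, Matrix.mul_one]
  calc Kg = Sig * (Hᵀ * Q⁻¹) := by rw [hKg, Matrix.mul_assoc]
    _ = Sig * ((Hᵀ * Q⁻¹ * H + SO⁻¹ + Sb⁻¹) * (P * Hᵀ * (H * P * Hᵀ + Q)⁻¹)) := by rw [key]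
    _ = (Sig * (Hᵀ * Q⁻¹ * H + SO⁻¹ + Sb⁻¹)) * (P * Hᵀ * (H * P * Hᵀ + Q)⁻¹) :=
        (Matrix.mul_assoc _ _ _).symm
    _ = P * Hᵀ * (H * P * Hᵀ + Q)⁻¹ := by
        rw [hSig, Matrix.nonsing_inv_mul _ hMdet, Matrix.one_mul]
    _ = Sb * (Sb + SO)⁻¹ * SO * Hᵀ * (H * (Sb * (Sb + SO)⁻¹ * SO) * Hᵀ + Q)⁻¹ := rfl
end

section
/- With Σ̄, Σ_O, Q symmetric positive definite, H an m×n matrix, Σ = (HᵀQ⁻¹H + Σ_O⁻¹ + Σ̄⁻¹)⁻¹, and K = ΣHᵀQ⁻¹, the posterior covariance satisfies Σ = (I − KH)·Σ̄(Σ̄+Σ_O)⁻¹Σ_O. -/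
open Matrix

/-- Posterior covariance form of the modified EKF update with object uncertainty:
`Σ = (I − KH)·Σ̄(Σ̄+Σ_O)⁻¹Σ_O`. -/
theorem kalman_posterior_covariance_form {n m : ℕ}
    (Sb SO : Matrix (Fin n) (Fin n) ℝ) (Q : Matrix (Fin m) (Fin m) ℝ)
    (H : Matrix (Fin m) (Fin n) ℝ)
    (hSb : Sb.PosDef) (hSO : SO.PosDef) (hQ : Q.PosDef) :
    ∀ (Sig : Matrix (Fin n) (Fin n) ℝ) (Kg : Matrix (Fin n) (Fin m) ℝ),
      Sig = (Hᵀ * Q⁻¹ * H + SO⁻¹ + Sb⁻¹)⁻¹ →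
      Kg = Sig * Hᵀ * Q⁻¹ →
      Sig = (1 - Kg * H) * (Sb * (Sb + SO)⁻¹ * SO) := by
  intro Sig Kg hSig hKg
  have hSbu : IsUnit Sb.det := hSb.det_pos.ne'.isUnit
  have hSOu : IsUnit SO.det := hSO.det_pos.ne'.isUnit
  have hPSD : (Hᵀ * Q⁻¹ * H).PosSemidef := by
    have := hQ.inv.posSemidef.conjTranspose_mul_mul_same H
    simpa using this
  have hS2 : (SO⁻¹ + Sb⁻¹).PosDef := hSO.inv.add hSb.inv
  set M := Hᵀ * Q⁻¹ * H + SO⁻¹ + Sb⁻¹ with hMdef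
  have hM : M.PosDef := by
    have := hS2.add_posSemidef hPSD
    simpa [hMdef, add_assoc, add_comm] using this
  have hMu : IsUnit M.det := hM.det_pos.ne'.isUnit
  have hS2u : IsUnit (SO⁻¹ + Sb⁻¹).det := hS2.det_pos.ne'.isUnit
  -- factorization of SO⁻¹ + Sb⁻¹
  have hfact : SO⁻¹ * (Sb + SO) * Sb⁻¹ = SO⁻¹ + Sb⁻¹ := by
    rw [Matrix.mul_add, Matrix.add_mul, Matrix.mul_assoc SO⁻¹ Sb Sb⁻¹,
      Matrix.mul_nonsing_inv _ hSbu, Matrix.mul_one,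
      Matrix.nonsing_inv_mul _ hSOu, Matrix.one_mul]
  have hP : Sb * (Sb + SO)⁻¹ * SO = (SO⁻¹ + Sb⁻¹)⁻¹ := by
    rw [← hfact, Matrix.mul_inv_rev, Matrix.mul_inv_rev,
      Matrix.nonsing_inv_nonsing_inv _ hSbu, Matrix.nonsing_inv_nonsing_inv _ hSOu,
      Matrix.mul_assoc]
  subst hSig hKg
  rw [hP]
  have hA : Hᵀ * Q⁻¹ * H = M - (SO⁻¹ + Sb⁻¹) := by rw [hMdef]; abel
  have h1 : 1 - M⁻¹ * Hᵀ * Q⁻¹ * H = M⁻¹ * (SO⁻¹ + Sb⁻¹) := by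
    rw [Matrix.mul_assoc M⁻¹ Hᵀ Q⁻¹, Matrix.mul_assoc M⁻¹ (Hᵀ * Q⁻¹) H,
      hA, Matrix.mul_sub,
      Matrix.nonsing_inv_mul _ hMu, sub_sub_cancel]
  rw [h1, Matrix.mul_assoc, Matrix.mul_nonsing_inv _ hS2u, Matrix.mul_one]
end
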